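/- Let N be a Binomial(n, q) random variable with n ≥ 1 and q ∈ (0,1), conditioned implicitly to be at least 1 via the bound N ∨ 1. Then for every r > 0, E[(N ∨ 1)^{-r}] ≤ exp(−3nq/32) + (nq/2)^{-r}, where the first term bounds the probability that |N/n − q| > q/2 via Bernstein's inequality. -/

import Mathlib

open MeasureTheory ProbabilityTheory Finset Classical
noncomputable section

/-- For `N = ∑_{i=1}^n 1_{A_i}` a Binomial(n,q) count (the `A_i` independent events of
probability `q`), for every `r > 0`,
`E[(N ∨ 1)^{-r}] ≤ exp(−3nq/32) + (nq/2)^{-r}`. -/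
theorem binomial_inverse_moment {Ω : Type*} [MeasurableSpace Ω] (μ : Measure Ω)
    [IsProbabilityMeasure μ] (n : ℕ) (hn : 1 ≤ n) (q : ℝ) (hq : 0 < q) (hq1 : q < 1)
    (A : Fin n → Set Ω) (hmeas : ∀ i, MeasurableSet (A i))
    (hindep : iIndepSet A μ)
    (hq' : ∀ i, μ (A i) = ENNReal.ofReal q)
    (N : Ω → ℕ) (hN : ∀ ω, N ω = (Finset.univ.filter fun i => ω ∈ A i).card)
    (r : ℝ) (hr : 0 < r) :
    ∫ ω, ((max (N ω) 1 : ℕ) : ℝ) ^ (-r) ∂μ ≤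
      Real.exp (-(3 * n * q) / 32) + (n * q / 2) ^ (-r) := by
  classical
  set t : ℝ := -2⁻¹ with ht_def
  set c : ℝ := Real.exp t with hc_def
  have hc_pos : 0 < c := Real.exp_pos _
  -- c ≤ 21/32
  have hc_le : c ≤ 21 / 32 := by
    have h1 : c * c = Real.exp (-1) := by
      rw [hc_def, ← Real.exp_add]; norm_num
    have h2 : Real.exp (-1) < 441 / 1024 := by
      rw [Real.exp_neg]
      rw [inv_lt_iff_one_lt_mul₀ (by positivity)]
      nlinarith [Real.exp_one_gt_d9]
    nlinarith [hc_pos.le]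
  -- the indicator variables
  set X : Fin n → Ω → ℝ := fun i => (A i).indicator (fun _ => (1 : ℝ)) with hX_def
  have hXmeas : ∀ i, Measurable (X i) := fun i =>
    (measurable_const.indicator (hmeas i))
  have hXindep : iIndepFun X μ :=
    hindep.iIndepFun_indicator
  -- probability of each event as a real
  have hμA : ∀ i, (μ (A i)).toReal = q := fun i => by
    rw [hq' i, ENNReal.toReal_ofReal hq.le]
  -- exp (t * X i) rewritten
  have hexp_eq : ∀ i, (fun ω => Real.exp (t * X i ω)) =
      fun ω => 1 + (c - 1) * (A i).indicator (fun _ => (1 : ℝ)) ω := by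
    intro i
    funext ω
    by_cases h : ω ∈ A i <;>
      simp [hX_def, Set.indicator_of_mem, Set.indicator_of_notMem, h, hc_def]
  have hint : ∀ i, Integrable (fun ω => Real.exp (t * X i ω)) μ := by
    intro i
    rw [hexp_eq i]
    exact (integrable_const _).add
      (((integrable_const (1 : ℝ)).indicator (hmeas i)).const_mul _)
  -- mgf of each indicator
  have hmgf : ∀ i, mgf (X i) μ t = 1 + (c - 1) * q := by
    intro i
    rw [mgf, hexp_eq i]
    rw [integral_add (integrable_const _)
      (((integrable_const (1 : ℝ)).indicator (hmeas i)).const_mul _)]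
    rw [integral_const, integral_const_mul, integral_indicator_const _ (hmeas i)]
    simp [Measure.real, hμA i, measure_univ]
  -- mgf of the sum
  set S : Ω → ℝ := ∑ i, X i with hS_def
  have hmgfS : mgf S μ t = (1 + (c - 1) * q) ^ n := by
    rw [hS_def, hXindep.mgf_sum hXmeas]
    simp [hmgf]
  -- S = N as reals
  have hSN : ∀ ω, S ω = (N ω : ℝ) := by
    intro ω
    rw [hS_def, hN ω]
    simp only [Finset.sum_apply]
    rw [← Finset.sum_boole]
    refine Finset.sum_congr rfl fun i _ => ?_
    by_cases h : ω ∈ A i <;>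
      simp [hX_def, Set.indicator_of_mem, Set.indicator_of_notMem, h]
  -- Chernoff bound
  have hSint : Integrable (fun ω => Real.exp (t * S ω)) μ := by
    have := hXindep.integrable_exp_mul_sum hXmeas (s := Finset.univ)
      (fun i _ => hint i)
    simpa [hS_def] using this
  have hchernoff : (μ {ω | S ω ≤ n * q / 2}).toReal ≤
      Real.exp (-t * (n * q / 2)) * (1 + (c - 1) * q) ^ n := by
    rw [← hmgfS]
    exact measure_le_le_exp_mul_mgf _ (by rw [ht_def]; norm_num) hSint
  -- numeric bound: the Chernoff bound is at most exp(-3nq/32)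
  have hnq_pos : (0 : ℝ) < n * q := by
    have : (0 : ℝ) < n := by exact_mod_cast hn
    positivity
  have hbase_nonneg : (0 : ℝ) ≤ 1 + (c - 1) * q := by nlinarith
  have hbase_le : 1 + (c - 1) * q ≤ Real.exp ((c - 1) * q) := by
    have := Real.add_one_le_exp ((c - 1) * q)
    linarith
  have hnum : Real.exp (-t * (n * q / 2)) * (1 + (c - 1) * q) ^ n ≤
      Real.exp (-(3 * n * q) / 32) := by
    have h1 : (1 + (c - 1) * q) ^ n ≤ Real.exp ((c - 1) * q) ^ n :=
      pow_le_pow_left₀ hbase_nonneg hbase_le n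
    have h2 : Real.exp ((c - 1) * q) ^ n = Real.exp (n * ((c - 1) * q)) := by
      rw [← Real.exp_nat_mul]
    calc Real.exp (-t * (n * q / 2)) * (1 + (c - 1) * q) ^ n
        ≤ Real.exp (-t * (n * q / 2)) * Real.exp (n * ((c - 1) * q)) := by
          rw [← h2]; exact mul_le_mul_of_nonneg_left h1 (Real.exp_pos _).le
      _ = Real.exp (-t * (n * q / 2) + n * ((c - 1) * q)) := by rw [← Real.exp_add]
      _ ≤ Real.exp (-(3 * n * q) / 32) := by
          apply Real.exp_le_exp.2
          have hn' : (0 : ℝ) ≤ n := Nat.cast_nonneg n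
          rw [ht_def]
          nlinarith [mul_nonneg hn' hq.le]
  -- measurability of N
  have hNnat : Measurable N := by
    have hNe : N = fun ω => ∑ i, if ω ∈ A i then 1 else 0 := by
      funext ω; rw [hN ω, Finset.card_filter]
    rw [hNe]
    exact Finset.measurable_sum _ fun i _ =>
      Measurable.ite (hmeas i) measurable_const measurable_const
  have hNmeas : Measurable fun ω => (N ω : ℝ) :=
    (measurable_from_top (β := ℝ)).comp hNnat
  -- the integrand
  set f : Ω → ℝ := fun ω => ((max (N ω) 1 : ℕ) : ℝ) ^ (-r) with hf_def
  have hf_eq : ∀ ω, f ω = (max ((N ω : ℝ)) 1) ^ (-r) := by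
    intro ω; rw [hf_def]; congr 1; push_cast; rfl
  have hf_pos : ∀ ω, 0 < f ω := by
    intro ω; rw [hf_eq ω]
    exact Real.rpow_pos_of_pos (lt_of_lt_of_le one_pos (le_max_right _ _)) _
  have hf_le_one : ∀ ω, f ω ≤ 1 := by
    intro ω; rw [hf_eq ω]
    apply Real.rpow_le_one_of_one_le_of_nonpos (le_max_right _ _) (by linarith)
  have hfmeas : Measurable f := by
    have : f = (fun k : ℕ => ((max k 1 : ℕ) : ℝ) ^ (-r)) ∘ N := rfl
    rw [this]
    exact (measurable_from_top (β := ℝ)).comp hNnat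
  have hfint : Integrable f μ := by
    refine Integrable.mono' (integrable_const (1 : ℝ)) hfmeas.aestronglyMeasurable
      (ae_of_all _ fun ω => ?_)
    rw [Real.norm_eq_abs, abs_of_pos (hf_pos ω)]
    exact hf_le_one ω
  -- the bad set
  set B : Set Ω := {ω | (N ω : ℝ) < n * q / 2} with hB_def
  have hBmeas : MeasurableSet B := measurableSet_lt hNmeas measurable_const
  -- pointwise bound
  have hptwise : ∀ ω, f ω ≤ B.indicator (fun _ => (1 : ℝ)) ω + (n * q / 2) ^ (-r) := by
    intro ω
    by_cases h : ω ∈ B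
    · rw [Set.indicator_of_mem h]
      have : (0 : ℝ) ≤ (n * q / 2) ^ (-r) := Real.rpow_nonneg (by positivity) _
      linarith [hf_le_one ω]
    · rw [Set.indicator_of_notMem h]
      rw [hB_def] at h
      simp only [Set.mem_setOf_eq, not_lt] at h
      rw [hf_eq ω, zero_add]
      exact Real.rpow_le_rpow_of_nonpos (by positivity)
        (le_trans h (le_max_left _ _)) (by linarith)
  -- integrate
  have hg_int : Integrable (fun ω => B.indicator (fun _ => (1 : ℝ)) ω + (n * q / 2) ^ (-r)) μ :=
    ((integrable_const (1 : ℝ)).indicator hBmeas).add (integrable_const _)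
  calc ∫ ω, ((max (N ω) 1 : ℕ) : ℝ) ^ (-r) ∂μ
      = ∫ ω, f ω ∂μ := rfl
    _ ≤ ∫ ω, (B.indicator (fun _ => (1 : ℝ)) ω + (n * q / 2) ^ (-r)) ∂μ :=
        integral_mono hfint hg_int hptwise
    _ = (μ B).toReal + (n * q / 2) ^ (-r) := by
        rw [integral_add ((integrable_const (1 : ℝ)).indicator hBmeas) (integrable_const _),
          integral_indicator_const _ hBmeas, integral_const]
        simp [Measure.real, measure_univ]
    _ ≤ Real.exp (-(3 * n * q) / 32) + (n * q / 2) ^ (-r) := by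
        gcongr
        refine le_trans ?_ (hchernoff.trans hnum)
        apply ENNReal.toReal_mono (measure_ne_top _ _)
        apply measure_mono
        intro ω hω
        rw [hB_def] at hω
        simp only [Set.mem_setOf_eq] at hω ⊢
        rw [hSN ω]
        exact hω.le
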